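/- For a consistent system (X W⋆ = Y for some W⋆ with columns in range(X^T)) and iterates W_k with columns in range(X^T), the randomized Kaczmarz method with probabilities p_i = ‖x_i‖²/‖X‖_F² satisfies E[‖W_{k+1} − W⋆‖_F² | W_k] ≤ (1 − σ_min⁺(X)²/‖X‖_F²) ‖W_k − W⋆‖_F². -/

import Mathlib

open Matrix Finset

/-- The square of the smallest nonzero singular value of `X`, i.e. the smallest
positive eigenvalue of `Xᵀ X`. -/
noncomputable def sMinPosSq {n d : ℕ} (X : Matrix (Fin n) (Fin d) ℝ) : ℝ :=
  sInf {t : ℝ | 0 < t ∧ ∃ v : Fin d → ℝ, v ≠ 0 ∧ (Xᵀ * X).mulVec v = t • v}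

lemma kacz_key {n d : ℕ} (X : Matrix (Fin n) (Fin d) ℝ) (v : Fin d → ℝ)
    (hv : ∃ u : Fin n → ℝ, Xᵀ.mulVec u = v) :
    sMinPosSq X * (v ⬝ᵥ v) ≤ (X *ᵥ v) ⬝ᵥ (X *ᵥ v) := by
  classical
  obtain ⟨u, hu⟩ := hv
  have hA : (Xᵀ * X).IsHermitian := by simpa using isHermitian_conjTranspose_mul_self X
  set A := Xᵀ * X with hAdef
  set U : Matrix (Fin d) (Fin d) ℝ := (hA.eigenvectorUnitary : Matrix (Fin d) (Fin d) ℝ) with hUdef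
  set μ : Fin d → ℝ := hA.eigenvalues with hμdef
  have hstar : star U = Uᵀ := by
    ext i j
    simp [Matrix.star_apply]
  have hUUt : U * Uᵀ = 1 := by
    rw [← hstar]
    exact (Matrix.mem_unitaryGroup_iff).mp (hA.eigenvectorUnitary).2
  have hspec : A = U * Matrix.diagonal μ * Uᵀ := by
    rw [← hstar]
    convert hA.spectral_theorem using 2
    simp only [Unitary.conjStarAlgAut_apply]; rfl
  set w : Fin d → ℝ := Uᵀ *ᵥ v with hwdef
  -- column j of U is the eigenvector b j
  have hcol : ∀ j, (fun i => U i j) = ⇑(hA.eigenvectorBasis j) := by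
    intro j; funext i; exact hA.eigenvectorUnitary_apply i j
  have heig : ∀ j, A *ᵥ (fun i => U i j) = μ j • (fun i => U i j) := by
    intro j; rw [hcol j]; exact hA.mulVec_eigenvectorBasis j
  have hw : ∀ j, w j = (fun i => U i j) ⬝ᵥ v := by
    intro j
    simp [hwdef, Matrix.mulVec, dotProduct, Matrix.transpose_apply]
  -- v ⬝ᵥ v = w ⬝ᵥ w
  have hvv : v ⬝ᵥ v = w ⬝ᵥ w := by
    rw [hwdef, Matrix.dotProduct_mulVec, Matrix.vecMul_transpose,
      Matrix.mulVec_mulVec, hUUt, Matrix.one_mulVec]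
  -- quadratic form
  have hquad : v ⬝ᵥ (A *ᵥ v) = ∑ j, μ j * (w j * w j) := by
    rw [hspec]
    rw [← Matrix.mulVec_mulVec, ← Matrix.mulVec_mulVec]
    rw [Matrix.dotProduct_mulVec (v := v), ← Matrix.mulVec_transpose]
    have : Uᵀ *ᵥ v = w := rfl
    rw [this]
    simp [Matrix.mulVec_diagonal, dotProduct, mul_comm, mul_assoc, mul_left_comm]
  -- (Xv)⬝(Xv) = v ⬝ A v
  have hXv : (X *ᵥ v) ⬝ᵥ (X *ᵥ v) = v ⬝ᵥ (A *ᵥ v) := by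
    rw [hAdef, ← Matrix.mulVec_mulVec, Matrix.dotProduct_mulVec (v := v),
      Matrix.vecMul_transpose]
  -- kernel components vanish
  have hker : ∀ j, μ j = 0 → w j = 0 := by
    intro j hj
    have hXb : X *ᵥ (fun i => U i j) = 0 := by
      have h0 : (X *ᵥ fun i => U i j) ⬝ᵥ (X *ᵥ fun i => U i j) = 0 := by
        have : (fun i => U i j) ⬝ᵥ (A *ᵥ fun i => U i j) = 0 := by
          rw [heig j, hj, zero_smul, dotProduct_zero]
        rwa [hAdef, ← Matrix.mulVec_mulVec, Matrix.dotProduct_mulVec,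
          Matrix.vecMul_transpose] at this
      exact (dotProduct_self_eq_zero).mp h0
    rw [hw j, ← hu, Matrix.dotProduct_mulVec, Matrix.vecMul_transpose, hXb,
      zero_dotProduct]
  -- eigenvalues nonneg
  have hμnn : ∀ j, 0 ≤ μ j := by
    intro j
    have hb : (fun i => U i j) ≠ 0 := by
      rw [hcol j]
      intro h
      exact hA.eigenvectorBasis.orthonormal.ne_zero j (by ext i; exact congrFun h i)
    have hpos : 0 < (fun i => U i j) ⬝ᵥ (fun i => U i j) := by
      rcases lt_or_eq_of_le (Finset.sum_nonneg fun i _ => mul_self_nonneg ((fun i => U i j) i)) with h | h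
      · exact h
      · exact absurd ((dotProduct_self_eq_zero).mp h.symm) hb
    have hq : μ j * ((fun i => U i j) ⬝ᵥ (fun i => U i j))
        = (X *ᵥ fun i => U i j) ⬝ᵥ (X *ᵥ fun i => U i j) := by
      have h1 : (fun i => U i j) ⬝ᵥ (A *ᵥ fun i => U i j)
          = μ j * ((fun i => U i j) ⬝ᵥ (fun i => U i j)) := by
        rw [heig j, dotProduct_smul]; simp [smul_eq_mul]
      rw [← h1, hAdef, ← Matrix.mulVec_mulVec, Matrix.dotProduct_mulVec,
        Matrix.vecMul_transpose]
    have hXnn : 0 ≤ (X *ᵥ fun i => U i j) ⬝ᵥ (X *ᵥ fun i => U i j) :=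
      Finset.sum_nonneg fun i _ => mul_self_nonneg _
    nlinarith [hpos, hXnn, hq]
  -- termwise bound
  have hterm : ∀ j, sMinPosSq X * (w j * w j) ≤ μ j * (w j * w j) := by
    intro j
    rcases eq_or_lt_of_le (hμnn j) with h0 | hpos
    · rw [hker j h0.symm]; simp
    · have hmem : μ j ∈ {t : ℝ | 0 < t ∧ ∃ v : Fin d → ℝ, v ≠ 0 ∧ (Xᵀ * X).mulVec v = t • v} := by
        refine ⟨hpos, (fun i => U i j), ?_, heig j⟩
        rw [hcol j]
        intro h
        exact hA.eigenvectorBasis.orthonormal.ne_zero j (by ext i; exact congrFun h i)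
      have hbdd : BddBelow {t : ℝ | 0 < t ∧ ∃ v : Fin d → ℝ, v ≠ 0 ∧ (Xᵀ * X).mulVec v = t • v} :=
        ⟨0, fun t ht => le_of_lt ht.1⟩
      exact mul_le_mul_of_nonneg_right (csInf_le hbdd hmem) (mul_self_nonneg _)
  calc sMinPosSq X * (v ⬝ᵥ v) = ∑ j, sMinPosSq X * (w j * w j) := by
        rw [hvv]; simp [dotProduct, Finset.mul_sum]
    _ ≤ ∑ j, μ j * (w j * w j) := Finset.sum_le_sum fun j _ => hterm j
    _ = v ⬝ᵥ (A *ᵥ v) := hquad.symm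
    _ = (X *ᵥ v) ⬝ᵥ (X *ᵥ v) := hXv.symm

/-- For a consistent system `Y = X W⋆` with the columns of `W⋆` and of `W_k` in
the range of `Xᵀ`, the randomized Kaczmarz method with probabilities
`p_i = ‖x_i‖²/‖X‖_F²` satisfies
`E[‖W_{k+1} − W⋆‖_F² | W_k] ≤ (1 − σ_min⁺(X)²/‖X‖_F²) ‖W_k − W⋆‖_F²`. -/
theorem kaczmarz_consistent_contraction
    {n d g : ℕ} (X : Matrix (Fin n) (Fin d) ℝ) (hrows : ∀ i, X i ≠ 0)
    (Y : Matrix (Fin n) (Fin g) ℝ) (Wk Ws : Matrix (Fin d) (Fin g) ℝ)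
    (hconsistent : Y = X * Ws)
    (hWs : ∀ j, ∃ u : Fin n → ℝ, Xᵀ.mulVec u = fun l => Ws l j)
    (hWk : ∀ j, ∃ u : Fin n → ℝ, Xᵀ.mulVec u = fun l => Wk l j) :
    let frob : ∀ {a b : ℕ}, Matrix (Fin a) (Fin b) ℝ → ℝ :=
      fun A => ∑ i, ∑ j, (A i j) ^ 2
    let p : Fin n → ℝ := fun i => (X i ⬝ᵥ X i) / frob X
    let Wnext : Fin n → Matrix (Fin d) (Fin g) ℝ := fun i =>
      Wk + (X i ⬝ᵥ X i)⁻¹ • vecMulVec (X i) (Y i - Matrix.vecMul (X i) Wk)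
    (∑ i, p i * frob (Wnext i - Ws)) ≤
      (1 - sMinPosSq X / frob X) * frob (Wk - Ws) := by
  classical
  intro frob p Wnext
  set E : Matrix (Fin d) (Fin g) ℝ := Wk - Ws with hEdef
  -- degenerate case n = 0
  rcases Nat.eq_zero_or_pos n with h0 | hn
  · subst h0
    have hE0 : ∀ l j, E l j = 0 := by
      intro l j
      obtain ⟨uk, huk⟩ := hWk j
      obtain ⟨us, hus⟩ := hWs j
      have hk := congrFun huk l
      have hs := congrFun hus l
      simp [Matrix.mulVec, dotProduct] at hk hs
      simp [hEdef, Matrix.sub_apply, ← hk, ← hs]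
    have hfE : frob E = 0 := by
      simp only [frob]
      refine Finset.sum_eq_zero fun l _ => Finset.sum_eq_zero fun j _ => ?_
      rw [hE0 l j]; ring
    rw [show (Finset.univ : Finset (Fin 0)) = ∅ from rfl, Finset.sum_empty, hfE, mul_zero]
  · -- main case
    have hNE : (Finset.univ : Finset (Fin n)).Nonempty := ⟨⟨0, hn⟩, Finset.mem_univ _⟩
    set c : Fin n → ℝ := fun i => X i ⬝ᵥ X i with hcdef
    have hcpos : ∀ i, 0 < c i := by
      intro i
      rcases lt_or_eq_of_le (Finset.sum_nonneg fun l _ => mul_self_nonneg (X i l)) with h | h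
      · exact h
      · exact absurd ((dotProduct_self_eq_zero).mp h.symm) (hrows i)
    have hFc : frob X = ∑ i, c i := by
      simp only [frob, hcdef, dotProduct]
      exact Finset.sum_congr rfl fun i _ => Finset.sum_congr rfl fun j _ => by ring
    have hF : 0 < frob X := by
      rw [hFc]; exact Finset.sum_pos (fun i _ => hcpos i) hNE
    -- row residuals
    set m : Fin n → Fin g → ℝ := fun i => Matrix.vecMul (X i) E with hmdef
    have hm : ∀ i j, m i j = ∑ l, X i l * E l j := by
      intro i j; simp [hmdef, Matrix.vecMul, dotProduct]
    have hr : ∀ i, Y i - Matrix.vecMul (X i) Wk = fun j => -(m i j) := by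
      intro i; funext j
      have : Y i j = ∑ l, X i l * Ws l j := by
        rw [hconsistent]; simp [Matrix.mul_apply]
      simp only [Pi.sub_apply, this, hm i j, hEdef, Matrix.sub_apply, Matrix.vecMul, dotProduct]
      rw [← Finset.sum_sub_distrib, ← Finset.sum_neg_distrib]
      exact Finset.sum_congr rfl fun l _ => by ring
    -- entrywise formula for the iterate
    have hentry : ∀ i l j, (Wnext i - Ws) l j = E l j - (c i)⁻¹ * (X i l * m i j) := by
      intro i l j
      simp only [Wnext, Matrix.sub_apply, Matrix.add_apply, Matrix.smul_apply,
        Matrix.vecMulVec_apply, hr i, hEdef, smul_eq_mul]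
      ring
    -- per-row Frobenius identity
    have hstep : ∀ i, frob (Wnext i - Ws) = frob E - (c i)⁻¹ * ∑ j, (m i j)^2 := by
      intro i
      have hci := (hcpos i).ne'
      simp only [frob]
      calc ∑ l, ∑ j, ((Wnext i - Ws) l j)^2
          = ∑ j, ∑ l, (E l j - (c i)⁻¹ * (X i l * m i j))^2 := by
            rw [Finset.sum_comm]
            exact Finset.sum_congr rfl fun j _ => Finset.sum_congr rfl fun l _ => by
              rw [hentry i l j]
        _ = ∑ j, ((∑ l, (E l j)^2) - (c i)⁻¹ * (m i j)^2) := by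
            refine Finset.sum_congr rfl fun j _ => ?_
            have h2 : ∑ l, (E l j - (c i)⁻¹ * (X i l * m i j))^2
                = (∑ l, (E l j)^2) - (2 * (c i)⁻¹ * m i j) * (∑ l, X i l * E l j)
                  + ((c i)⁻¹^2 * (m i j)^2) * (∑ l, X i l * X i l) := by
              rw [Finset.mul_sum, Finset.mul_sum, ← Finset.sum_sub_distrib,
                ← Finset.sum_add_distrib]
              exact Finset.sum_congr rfl fun l _ => by ring
            rw [h2, ← hm i j]
            have hcc : (∑ l, X i l * X i l) = c i := rfl
            rw [hcc]
            field_simp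
            ring
        _ = (∑ j, ∑ l, (E l j)^2) - (c i)⁻¹ * ∑ j, (m i j)^2 := by
            rw [Finset.sum_sub_distrib, Finset.mul_sum]
        _ = (∑ l, ∑ j, (E l j)^2) - (c i)⁻¹ * ∑ j, (m i j)^2 := by
            rw [Finset.sum_comm]
    -- sum over rows
    have hsum : (∑ i, p i * frob (Wnext i - Ws))
        = frob E - (∑ i, ∑ j, (m i j)^2) / frob X := by
      calc (∑ i, p i * frob (Wnext i - Ws))
          = ∑ i, (c i / frob X * frob E - (∑ j, (m i j)^2) / frob X) := by
            refine Finset.sum_congr rfl fun i _ => ?_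
            rw [hstep i]
            show c i / frob X * (frob E - (c i)⁻¹ * ∑ j, (m i j)^2) = _
            have hci := (hcpos i).ne'
            field_simp
        _ = (∑ i, c i) / frob X * frob E - (∑ i, ∑ j, (m i j)^2) / frob X := by
            rw [Finset.sum_sub_distrib, ← Finset.sum_mul, ← Finset.sum_div,
              ← Finset.sum_div]
        _ = frob E - (∑ i, ∑ j, (m i j)^2) / frob X := by
            rw [← hFc, div_self hF.ne', one_mul]
    rw [hsum]
    -- lower bound the residual sum via the spectral bound
    have hcols : sMinPosSq X * frob E ≤ ∑ i, ∑ j, (m i j)^2 := by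
      have hRE : (∑ i, ∑ j, (m i j)^2)
          = ∑ j, (X *ᵥ (fun l => E l j)) ⬝ᵥ (X *ᵥ (fun l => E l j)) := by
        rw [Finset.sum_comm]
        refine Finset.sum_congr rfl fun j _ => ?_
        show _ = ∑ i, (X i ⬝ᵥ fun l => E l j) * (X i ⬝ᵥ fun l => E l j)
        refine Finset.sum_congr rfl fun i _ => ?_
        have hXi : (X i ⬝ᵥ fun l => E l j) = m i j := by
          rw [hm]; rfl
        rw [hXi]; ring
      have hfE : frob E = ∑ j, (fun l => E l j) ⬝ᵥ (fun l => E l j) := by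
        show _ = ∑ j, ∑ l, E l j * E l j
        simp only [frob]
        rw [Finset.sum_comm]
        exact Finset.sum_congr rfl fun j _ => Finset.sum_congr rfl fun l _ => by ring
      rw [hRE, hfE, Finset.mul_sum]
      refine Finset.sum_le_sum fun j _ => ?_
      refine kacz_key X (fun l => E l j) ?_
      obtain ⟨uk, huk⟩ := hWk j
      obtain ⟨us, hus⟩ := hWs j
      refine ⟨uk - us, ?_⟩
      rw [Matrix.mulVec_sub, huk, hus]
      funext l
      simp [hEdef, Matrix.sub_apply]
    have hfrobE_nonneg : 0 ≤ frob E :=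
      Finset.sum_nonneg fun l _ => Finset.sum_nonneg fun j _ => sq_nonneg _
    have h1 : sMinPosSq X * frob E / frob X ≤ (∑ i, ∑ j, (m i j)^2) / frob X :=
      (div_le_div_iff_of_pos_right hF).mpr hcols
    calc frob E - (∑ i, ∑ j, (m i j)^2) / frob X
        ≤ frob E - sMinPosSq X * frob E / frob X := by linarith
      _ = (1 - sMinPosSq X / frob X) * frob E := by ring
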